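/- (Corollary 1: irreversible reaction with degradation.) Fix k_d > 0, r0 > 1, and t > 0. For k_f > 0 set α = 1 + k_f/(4π), β = √k_d, γ = −√k_d, and let F(k_f) = (k_f·exp(−k_d·t)/(4π·r0))·[ α·W((r0−1)/(2√t), α·√t)/((γ−α)(α−β)) + β·W((r0−1)/(2√t), β·√t)/((β−γ)(α−β)) + γ·W((r0−1)/(2√t), γ·√t)/((β−γ)(γ−α)) ]. Then as k_f → ∞, F(k_f) converges to (1/(2·r0))·[ exp(√k_d·(r0−1))·erfc((r0−1)/(2√t) + √(k_d·t)) + exp(−√k_d·(r0−1))·erfc((r0−1)/(2√t) − √(k_d·t)) ]. -/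

import Mathlib

open Filter Topology

/-- The complementary error function `erfc(x) = (2/√π)·∫_x^∞ exp(−u²) du`. -/
noncomputable def erfc (x : ℝ) : ℝ :=
  (2 / Real.sqrt Real.pi) * ∫ u in Set.Ioi x, Real.exp (-u ^ 2)

/-- `W(n,m) = exp(2·n·m + m²)·erfc(n+m)`. -/
noncomputable def W (n m : ℝ) : ℝ :=
  Real.exp (2 * n * m + m ^ 2) * erfc (n + m)

lemma erfc_nonneg (x : ℝ) : 0 ≤ erfc x := by
  apply mul_nonneg (by positivity)
  exact MeasureTheory.setIntegral_nonneg measurableSet_Ioi fun u _ => (Real.exp_pos _).le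

lemma integral_mul_exp_neg_sq_Ioi (x : ℝ) :
    (∫ u in Set.Ioi x, u * Real.exp (-u ^ 2)) = Real.exp (-x ^ 2) / 2 := by
  have hderiv : ∀ u ∈ Set.Ioi x, HasDerivAt (fun u : ℝ => -Real.exp (-u ^ 2) / 2)
      (u * Real.exp (-u ^ 2)) u := by
    intro u _
    have h1 : HasDerivAt (fun u : ℝ => -u ^ 2) (-(2 * u)) u := by
      simpa using (hasDerivAt_pow 2 u).fun_neg
    have h2 := (h1.exp).fun_neg.div_const 2
    refine h2.congr_deriv ?_
    ring_nf
  have hint : MeasureTheory.IntegrableOn (fun u : ℝ => u * Real.exp (-u ^ 2)) (Set.Ioi x) := by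
    have := integrable_mul_exp_neg_mul_sq (b := 1) one_pos
    simpa using this.integrableOn
  have htend : Tendsto (fun u : ℝ => -Real.exp (-u ^ 2) / 2) atTop (𝓝 0) := by
    have h1 : Tendsto (fun u : ℝ => Real.exp (-u ^ 2)) atTop (𝓝 0) := by
      have := Real.tendsto_exp_neg_atTop_nhds_zero.comp
        (tendsto_pow_atTop (n := 2) (by norm_num))
      simpa [Function.comp] using this
    have := (h1.neg).div_const 2
    simpa using this
  have hcont : ContinuousWithinAt (fun u : ℝ => -Real.exp (-u ^ 2) / 2) (Set.Ici x) x :=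
    (Continuous.continuousWithinAt (by continuity))
  rw [MeasureTheory.integral_Ioi_of_hasDerivAt_of_tendsto hcont hderiv hint htend]
  ring

lemma erfc_le {x : ℝ} (hx : 0 < x) :
    erfc x ≤ Real.exp (-x ^ 2) / (Real.sqrt Real.pi * x) := by
  have hπ : 0 < Real.sqrt Real.pi := Real.sqrt_pos.2 Real.pi_pos
  have hint1 : MeasureTheory.IntegrableOn (fun u : ℝ => Real.exp (-u ^ 2)) (Set.Ioi x) := by
    have := integrable_exp_neg_mul_sq (b := 1) one_pos
    simpa using this.integrableOn
  have hint2 : MeasureTheory.IntegrableOn (fun u : ℝ => u * Real.exp (-u ^ 2) / x)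
      (Set.Ioi x) := by
    have := integrable_mul_exp_neg_mul_sq (b := 1) one_pos
    simpa using (this.div_const x).integrableOn
  have hmono : (∫ u in Set.Ioi x, Real.exp (-u ^ 2))
      ≤ ∫ u in Set.Ioi x, u * Real.exp (-u ^ 2) / x := by
    apply MeasureTheory.setIntegral_mono_on hint1 hint2 measurableSet_Ioi
    intro u hu
    rw [le_div_iff₀ hx]
    have : 0 < Real.exp (-u ^ 2) := Real.exp_pos _
    nlinarith [Set.mem_Ioi.1 hu]
  have hval : (∫ u in Set.Ioi x, u * Real.exp (-u ^ 2) / x)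
      = Real.exp (-x ^ 2) / 2 / x := by
    rw [MeasureTheory.integral_div, integral_mul_exp_neg_sq_Ioi]
  calc erfc x = (2 / Real.sqrt Real.pi) * ∫ u in Set.Ioi x, Real.exp (-u ^ 2) := rfl
    _ ≤ (2 / Real.sqrt Real.pi) * (Real.exp (-x ^ 2) / 2 / x) := by
        apply mul_le_mul_of_nonneg_left _ (by positivity)
        rw [← hval]; exact hmono
    _ = Real.exp (-x ^ 2) / (Real.sqrt Real.pi * x) := by
        field_simp

lemma W_nonneg (n m : ℝ) : 0 ≤ W n m :=
  mul_nonneg (Real.exp_pos _).le (erfc_nonneg _)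

lemma W_tendsto {n : ℝ} (hn : 0 < n) : Tendsto (W n) atTop (𝓝 0) := by
  have hπ : 0 < Real.sqrt Real.pi := Real.sqrt_pos.2 Real.pi_pos
  apply squeeze_zero' (Eventually.of_forall fun m => W_nonneg n m)
  · filter_upwards [eventually_gt_atTop (0 : ℝ)] with m hm
    have hx : 0 < n + m := by linarith
    calc W n m = Real.exp (2 * n * m + m ^ 2) * erfc (n + m) := rfl
      _ ≤ Real.exp (2 * n * m + m ^ 2)
            * (Real.exp (-(n + m) ^ 2) / (Real.sqrt Real.pi * (n + m))) :=
          mul_le_mul_of_nonneg_left (erfc_le hx) (Real.exp_pos _).le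
      _ = Real.exp (-n ^ 2) / (Real.sqrt Real.pi * (n + m)) := by
          rw [mul_div_assoc', ← Real.exp_add,
            show 2 * n * m + m ^ 2 + -(n + m) ^ 2 = -n ^ 2 from by ring]
  · apply Tendsto.div_atTop (tendsto_const_nhds)
    exact (tendsto_atTop_add_const_left _ n tendsto_id).const_mul_atTop hπ

lemma ratio_tendsto (c d : ℝ) :
    Tendsto (fun x : ℝ => (x - c) / (x - d)) atTop (𝓝 1) := by
  have h : Tendsto (fun x : ℝ => 1 + (d - c) / (x - d)) atTop (𝓝 (1 + 0)) := by
    apply tendsto_const_nhds.add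
    apply Tendsto.div_atTop tendsto_const_nhds
    have := tendsto_atTop_add_const_right atTop (-d) (tendsto_id (α := ℝ))
    simpa [sub_eq_add_neg] using this
  rw [add_zero] at h
  apply h.congr'
  filter_upwards [eventually_gt_atTop d] with x hx
  have hxd : x - d ≠ 0 := ne_of_gt (sub_pos.2 hx)
  field_simp
  ring

set_option maxHeartbeats 2000000 in
/-- (Corollary 1: irreversible reaction with degradation.) Fix `k_d > 0`, `r0 > 1`, `t > 0`.
For `k_f` set `α = 1 + k_f/(4π)`, `β = √k_d`, `γ = −√k_d`, and let `F(k_f)` be the channel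
impulse response. Then as `k_f → ∞`, `F(k_f)` converges to
`(1/(2r0))·[ exp(√k_d·(r0−1))·erfc((r0−1)/(2√t) + √(k_d·t))
  + exp(−√k_d·(r0−1))·erfc((r0−1)/(2√t) − √(k_d·t)) ]`. -/
theorem irreversible_with_degradation_limit
    (k_d r0 t : ℝ) (hkd : 0 < k_d) (hr0 : 1 < r0) (ht : 0 < t) :
    Tendsto (fun k_f : ℝ =>
        (k_f * Real.exp (-k_d * t) / (4 * Real.pi * r0)) *
          ((1 + k_f / (4 * Real.pi))
              * W ((r0 - 1) / (2 * Real.sqrt t)) ((1 + k_f / (4 * Real.pi)) * Real.sqrt t)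
              / (((-Real.sqrt k_d) - (1 + k_f / (4 * Real.pi)))
                  * ((1 + k_f / (4 * Real.pi)) - Real.sqrt k_d))
            + Real.sqrt k_d
              * W ((r0 - 1) / (2 * Real.sqrt t)) (Real.sqrt k_d * Real.sqrt t)
              / ((Real.sqrt k_d - (-Real.sqrt k_d))
                  * ((1 + k_f / (4 * Real.pi)) - Real.sqrt k_d))
            + (-Real.sqrt k_d)
              * W ((r0 - 1) / (2 * Real.sqrt t)) ((-Real.sqrt k_d) * Real.sqrt t)
              / ((Real.sqrt k_d - (-Real.sqrt k_d))
                  * ((-Real.sqrt k_d) - (1 + k_f / (4 * Real.pi))))))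
      atTop
      (𝓝 ((1 / (2 * r0)) *
        (Real.exp (Real.sqrt k_d * (r0 - 1))
            * erfc ((r0 - 1) / (2 * Real.sqrt t) + Real.sqrt (k_d * t))
          + Real.exp (-Real.sqrt k_d * (r0 - 1))
            * erfc ((r0 - 1) / (2 * Real.sqrt t) - Real.sqrt (k_d * t))))) := by
  have hπ : 0 < Real.pi := Real.pi_pos
  set β := Real.sqrt k_d with hβdef
  have hβ : 0 < β := Real.sqrt_pos.2 hkd
  set s := Real.sqrt t with hsdef
  have hs : 0 < s := Real.sqrt_pos.2 ht
  set n := (r0 - 1) / (2 * s) with hndef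
  have hn0 : 0 < n := div_pos (by linarith) (by positivity)
  set e := Real.exp (-k_d * t) with hedef
  have hr : (0 : ℝ) < r0 := by linarith
  -- basic identities
  have hbs : β * s = Real.sqrt (k_d * t) := by
    rw [hβdef, hsdef]; exact (Real.sqrt_mul hkd.le t).symm
  have hbs2 : (β * s) ^ 2 = k_d * t := by
    rw [hbs]; exact Real.sq_sqrt (by positivity)
  have h2n : 2 * n * (β * s) = β * (r0 - 1) := by
    rw [hndef]; field_simp
  have hW2 : e * W n (β * s)
      = Real.exp (β * (r0 - 1)) * erfc (n + Real.sqrt (k_d * t)) := by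
    rw [hedef, W, ← mul_assoc, ← Real.exp_add,
      show -k_d * t + (2 * n * (β * s) + (β * s) ^ 2) = β * (r0 - 1) from by
        linear_combination hbs2 + h2n,
      show n + β * s = n + Real.sqrt (k_d * t) from by rw [hbs]]
  have hW3 : e * W n ((-β) * s)
      = Real.exp (-β * (r0 - 1)) * erfc (n - Real.sqrt (k_d * t)) := by
    rw [hedef, W, ← mul_assoc, ← Real.exp_add,
      show -k_d * t + (2 * n * ((-β) * s) + ((-β) * s) ^ 2) = -β * (r0 - 1) from by
        linear_combination hbs2 - h2n,
      show n + (-β) * s = n - Real.sqrt (k_d * t) from by rw [← hbs]; ring]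
  -- limit of the "nice" form
  have hA : Tendsto (fun k : ℝ => 1 + k / (4 * Real.pi)) atTop atTop :=
    tendsto_atTop_add_const_left _ 1 (tendsto_id.atTop_div_const (by positivity))
  have hR1 : Tendsto (fun k : ℝ =>
      ((1 + k / (4 * Real.pi)) - 1) / ((1 + k / (4 * Real.pi)) - β)) atTop (𝓝 1) :=
    (ratio_tendsto 1 β).comp hA
  have hR2 : Tendsto (fun k : ℝ =>
      -(((1 + k / (4 * Real.pi)) - 0) / ((1 + k / (4 * Real.pi)) - (-β)))) atTop (𝓝 (-1)) := by
    have := ((ratio_tendsto 0 (-β)).comp hA).neg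
    rw [show -(1:ℝ) = -1 from rfl] at this
    exact this
  have hR3 : Tendsto (fun k : ℝ =>
      ((1 + k / (4 * Real.pi)) - 1) / ((1 + k / (4 * Real.pi)) - (-β))) atTop (𝓝 1) :=
    (ratio_tendsto 1 (-β)).comp hA
  have hW0 : Tendsto (fun k : ℝ => W n ((1 + k / (4 * Real.pi)) * s)) atTop (𝓝 0) :=
    (W_tendsto hn0).comp (hA.atTop_mul_const hs)
  have hT1 : Tendsto (fun k : ℝ =>
      ((((1 + k / (4 * Real.pi)) - 1) / ((1 + k / (4 * Real.pi)) - β))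
        * (-(((1 + k / (4 * Real.pi)) - 0) / ((1 + k / (4 * Real.pi)) - (-β))))
        * (e / r0)) * W n ((1 + k / (4 * Real.pi)) * s)) atTop
      (𝓝 (1 * (-1) * (e / r0) * 0)) :=
    ((hR1.mul hR2).mul tendsto_const_nhds).mul hW0
  have hT2 : Tendsto (fun k : ℝ =>
      (e * W n (β * s) / (2 * r0))
        * (((1 + k / (4 * Real.pi)) - 1) / ((1 + k / (4 * Real.pi)) - β))) atTop
      (𝓝 (e * W n (β * s) / (2 * r0) * 1)) :=
    tendsto_const_nhds.mul hR1
  have hT3 : Tendsto (fun k : ℝ =>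
      (e * W n ((-β) * s) / (2 * r0))
        * (((1 + k / (4 * Real.pi)) - 1) / ((1 + k / (4 * Real.pi)) - (-β)))) atTop
      (𝓝 (e * W n ((-β) * s) / (2 * r0) * 1)) :=
    tendsto_const_nhds.mul hR3
  have hsum := (hT1.add hT2).add hT3
  rw [show (1 / (2 * r0)) *
      (Real.exp (β * (r0 - 1)) * erfc (n + Real.sqrt (k_d * t))
        + Real.exp (-β * (r0 - 1)) * erfc (n - Real.sqrt (k_d * t)))
      = 1 * (-1) * (e / r0) * 0 + e * W n (β * s) / (2 * r0) * 1
        + e * W n ((-β) * s) / (2 * r0) * 1 from by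
    rw [← hW2, ← hW3]; ring]
  apply hsum.congr'
  filter_upwards [eventually_gt_atTop (4 * Real.pi * (β + 1))] with k hk
  have h4 : (0 : ℝ) < 4 * Real.pi := by positivity
  have hkb : β + 1 < k / (4 * Real.pi) := by
    rw [lt_div_iff₀ h4]; nlinarith
  rw [show k * e / (4 * Real.pi * r0) = k / (4 * Real.pi) * e / r0 from by ring]
  generalize hu : k / (4 * Real.pi) = u at hkb ⊢
  have h1 : (1 + u) - β ≠ 0 := ne_of_gt (by linarith)
  have h2 : (-β) - (1 + u) ≠ 0 := ne_of_lt (by linarith)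
  have h3 : β - -β ≠ 0 := ne_of_gt (by linarith)
  have h5 : (1 + u) - (-β) ≠ 0 := ne_of_gt (by linarith)
  have hu1 : (0:ℝ) < u := by linarith
  have hD1 : u * r0 * 2 + u ^ 2 * r0 + (r0 - r0 * β ^ 2) ≠ 0 := by
    have : (0:ℝ) < r0 * ((1 + u - β) * (1 + u + β)) := by
      apply mul_pos hr (mul_pos (by linarith) (by linarith))
    apply ne_of_gt
    nlinarith [this]
  have hD3 : r0 * 2 + r0 * β * 2 + r0 * u * 2 ≠ 0 := by
    apply ne_of_gt
    nlinarith [mul_pos hr hβ, mul_pos hr hu1]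
  rw [mul_add, mul_add]
  congr 1
  congr 1
  · field_simp [h1, h2, h5, hr.ne', hD1]
    ring
  · field_simp [h1, h3, hr.ne', hβ.ne']
    ring
  · field_simp [h2, h3, h5, hr.ne', hβ.ne', hD3]
    ring
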